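/- Let R be an algebraic curvature tensor on ℝⁿ (n ≥ 2) and let k > 0. Assume R is pointwise 1/4-pinched: for all X, Y ∈ ℝⁿ, (k/4)·(|X|²|Y|² − ⟨X,Y⟩²) ≤ R(X,Y,X,Y) ≤ k·(|X|²|Y|² − ⟨X,Y⟩²). Then R has nonnegative complex sectional curvature, i.e. R(Z, W, Z̄, W̄) ≥ 0 for all Z, W ∈ ℂⁿ. -/

import Mathlib

open Complex

noncomputable section

/-- An algebraic curvature tensor on `ℝⁿ`, given by its coefficients on the
standard basis, satisfying the usual symmetries and the first Bianchi identity.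
(A multilinear map `(ℝⁿ)⁴ → ℝ` with these symmetries is equivalent to such data.) -/
structure AlgCurv (n : ℕ) where
  R : Fin n → Fin n → Fin n → Fin n → ℝ
  skew₁ : ∀ i j k l, R i j k l = - R j i k l
  skew₂ : ∀ i j k l, R i j k l = - R i j l k
  pair_symm : ∀ i j k l, R i j k l = R k l i j
  bianchi : ∀ i j k l, R i j k l + R j k i l + R k i j l = 0

namespace AlgCurv

variable {n : ℕ}

/-- The multilinear map `(ℝⁿ)⁴ → ℝ` determined by the coefficients. -/
def evalR (T : AlgCurv n) (X Y U V : Fin n → ℝ) : ℝ :=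
  ∑ i : Fin n, ∑ j : Fin n, ∑ k : Fin n, ∑ l : Fin n,
    T.R i j k l * X i * Y j * U k * V l

/-- The `ℂ`-multilinear extension to `ℂⁿ = Fin n → ℂ`. -/
def evalC (T : AlgCurv n) (Z W U V : Fin n → ℂ) : ℂ :=
  ∑ i : Fin n, ∑ j : Fin n, ∑ k : Fin n, ∑ l : Fin n,
    (T.R i j k l : ℂ) * Z i * W j * U k * V l

end AlgCurv

/-- The standard (real) inner product on `ℝⁿ`. -/
def rInner {n : ℕ} (X Y : Fin n → ℝ) : ℝ := ∑ i : Fin n, X i * Y i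

/-- The `ℂ`-bilinear (not hermitian) extension `⟨Z,W⟩ = Σᵢ Zᵢ Wᵢ`. -/
def cInner {n : ℕ} (Z W : Fin n → ℂ) : ℂ := ∑ i : Fin n, Z i * W i

/-- Entrywise complex conjugation. -/
def conjV {n : ℕ} (Z : Fin n → ℂ) : Fin n → ℂ := fun i => starRingEnd ℂ (Z i)

/-- `R` has nonnegative complex sectional curvature: `R(Z,W,Z̄,W̄)` is a
nonnegative real number for all `Z, W ∈ ℂⁿ`. -/
def nonnegCSC {n : ℕ} (T : AlgCurv n) : Prop :=
  ∀ Z W : Fin n → ℂ, ∃ r : ℝ, 0 ≤ r ∧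
    T.evalC Z W (conjV Z) (conjV W) = (r : ℂ)

/-- The complexified vector `X + iY`. -/
def cx {n : ℕ} (X Y : Fin n → ℝ) : Fin n → ℂ :=
  fun i => (X i : ℂ) + Complex.I * (Y i : ℂ)

/-- The `ℂ`-multilinear extension of the curvature tensor of constant curvature one,
`I(X,Y,Z,W) = ⟨X,Z⟩⟨Y,W⟩ − ⟨X,W⟩⟨Y,Z⟩`. -/
def IC {n : ℕ} (Z W U V : Fin n → ℂ) : ℂ :=
  cInner Z U * cInner W V - cInner Z V * cInner W U

/-- The `p`-th standard basis vector of `ℂⁿ`. -/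
def basisC {n : ℕ} (p : Fin n) : Fin n → ℂ := fun i => if i = p then 1 else 0

/-- Hamilton's reaction term `Q(R)`, evaluated on `(Z, W, U, V)`
(with `U = Z̄`, `V = W̄` in applications). -/
def Qr {n : ℕ} (T : AlgCurv n) (Z W U V : Fin n → ℂ) : ℂ :=
  (∑ p : Fin n, ∑ q : Fin n,
      T.evalC Z W (basisC p) (basisC q) * T.evalC U V (basisC p) (basisC q))
  + 2 * (∑ p : Fin n, ∑ q : Fin n,
      T.evalC Z (basisC p) U (basisC q) * T.evalC W (basisC p) V (basisC q))
  - 2 * (∑ p : Fin n, ∑ q : Fin n,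
      T.evalC Z (basisC p) V (basisC q) * T.evalC W (basisC p) U (basisC q))

/-- The `ℂ`-linear extension of a real matrix (endomorphism of `ℝⁿ`) acting on `ℂⁿ`. -/
def mulVecC {n : ℕ} (A : Matrix (Fin n) (Fin n) ℝ) (Z : Fin n → ℂ) : Fin n → ℂ :=
  fun i => ∑ j : Fin n, (A i j : ℂ) * Z j

/-- `(A ∧ id)(Z, W, Z̄, W̄)`. -/
def wedgeId {n : ℕ} (A : Matrix (Fin n) (Fin n) ℝ) (Z W : Fin n → ℂ) : ℂ :=
  (1/2 : ℂ) * (cInner (mulVecC A Z) (conjV Z) * cInner W (conjV W)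
             + cInner (mulVecC A W) (conjV W) * cInner Z (conjV Z))
  - (1/2 : ℂ) * (cInner (mulVecC A W) (conjV Z) * cInner Z (conjV W)
               + cInner (mulVecC A Z) (conjV W) * cInner W (conjV Z))

/-- The Ricci curvature of `R`, as a matrix:  `⟨Ric(R)(X), Y⟩ = Σ_p R(X, e_p, Y, e_p)`. -/
def ricM {n : ℕ} (T : AlgCurv n) : Matrix (Fin n) (Fin n) ℝ :=
  Matrix.of fun i j => ∑ p : Fin n, T.R i p j p
section Part0

variable {n : ℕ}

private lemma sum4_prod {M : Type*} [AddCommMonoid M]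
    (f : Fin n → Fin n → Fin n → Fin n → M) :
    (∑ i : Fin n, ∑ j : Fin n, ∑ k : Fin n, ∑ l : Fin n, f i j k l)
      = ∑ p : Fin n × Fin n × Fin n × Fin n, f p.1 p.2.1 p.2.2.1 p.2.2.2 := by
  rw [Fintype.sum_prod_type]
  refine Finset.sum_congr rfl fun i _ => ?_
  rw [Fintype.sum_prod_type]
  refine Finset.sum_congr rfl fun j _ => ?_
  rw [Fintype.sum_prod_type]

private lemma sum4_congr {M : Type*} [AddCommMonoid M]
    {f g : Fin n → Fin n → Fin n → Fin n → M}
    (h : ∀ i j k l, f i j k l = g i j k l) :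
    (∑ i : Fin n, ∑ j : Fin n, ∑ k : Fin n, ∑ l : Fin n, f i j k l)
      = ∑ i : Fin n, ∑ j : Fin n, ∑ k : Fin n, ∑ l : Fin n, g i j k l :=
  Finset.sum_congr rfl fun i _ => Finset.sum_congr rfl fun j _ =>
    Finset.sum_congr rfl fun k _ => Finset.sum_congr rfl fun l _ => h i j k l

private lemma sum4_add {M : Type*} [AddCommMonoid M]
    (f g : Fin n → Fin n → Fin n → Fin n → M) :
    ((∑ i : Fin n, ∑ j : Fin n, ∑ k : Fin n, ∑ l : Fin n, f i j k l)
      + ∑ i : Fin n, ∑ j : Fin n, ∑ k : Fin n, ∑ l : Fin n, g i j k l)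
      = ∑ i : Fin n, ∑ j : Fin n, ∑ k : Fin n, ∑ l : Fin n, (f i j k l + g i j k l) := by
  rw [sum4_prod f, sum4_prod g, sum4_prod (fun i j k l => f i j k l + g i j k l)]
  exact Finset.sum_add_distrib.symm

private lemma sum4_swap12 {M : Type*} [AddCommMonoid M]
    (f : Fin n → Fin n → Fin n → Fin n → M) :
    (∑ i : Fin n, ∑ j : Fin n, ∑ k : Fin n, ∑ l : Fin n, f i j k l)
      = ∑ i : Fin n, ∑ j : Fin n, ∑ k : Fin n, ∑ l : Fin n, f j i k l := by
  rw [sum4_prod, sum4_prod]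
  exact Fintype.sum_equiv ⟨fun p => (p.2.1, p.1, p.2.2), fun p => (p.2.1, p.1, p.2.2),
    fun p => rfl, fun p => rfl⟩ _ _ (fun p => rfl)

private lemma sum4_swap34 {M : Type*} [AddCommMonoid M]
    (f : Fin n → Fin n → Fin n → Fin n → M) :
    (∑ i : Fin n, ∑ j : Fin n, ∑ k : Fin n, ∑ l : Fin n, f i j k l)
      = ∑ i : Fin n, ∑ j : Fin n, ∑ k : Fin n, ∑ l : Fin n, f i j l k := by
  rw [sum4_prod, sum4_prod]
  exact Fintype.sum_equiv ⟨fun p => (p.1, p.2.1, p.2.2.2, p.2.2.1),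
    fun p => (p.1, p.2.1, p.2.2.2, p.2.2.1),
    fun p => rfl, fun p => rfl⟩ _ _ (fun p => rfl)

private lemma sum4_pairswap {M : Type*} [AddCommMonoid M]
    (f : Fin n → Fin n → Fin n → Fin n → M) :
    (∑ i : Fin n, ∑ j : Fin n, ∑ k : Fin n, ∑ l : Fin n, f i j k l)
      = ∑ i : Fin n, ∑ j : Fin n, ∑ k : Fin n, ∑ l : Fin n, f k l i j := by
  rw [sum4_prod, sum4_prod]
  exact Fintype.sum_equiv ⟨fun p => (p.2.2.1, p.2.2.2, p.1, p.2.1),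
    fun p => (p.2.2.1, p.2.2.2, p.1, p.2.1),
    fun p => rfl, fun p => rfl⟩ _ _ (fun p => rfl)

/-- `i j k l ↦ j k i l` reindexing. -/
private lemma sum4_cycle {M : Type*} [AddCommMonoid M]
    (f : Fin n → Fin n → Fin n → Fin n → M) :
    (∑ i : Fin n, ∑ j : Fin n, ∑ k : Fin n, ∑ l : Fin n, f i j k l)
      = ∑ i : Fin n, ∑ j : Fin n, ∑ k : Fin n, ∑ l : Fin n, f j k i l := by
  rw [sum4_prod, sum4_prod]
  exact Fintype.sum_equiv ⟨fun p => (p.2.2.1, p.1, p.2.1, p.2.2.2),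
    fun p => (p.2.1, p.2.2.1, p.1, p.2.2.2),
    fun p => rfl, fun p => rfl⟩ _ _ (fun p => rfl)

private lemma sum4_cycle' {M : Type*} [AddCommMonoid M]
    (f : Fin n → Fin n → Fin n → Fin n → M) :
    (∑ i : Fin n, ∑ j : Fin n, ∑ k : Fin n, ∑ l : Fin n, f i j k l)
      = ∑ i : Fin n, ∑ j : Fin n, ∑ k : Fin n, ∑ l : Fin n, f k i j l := by
  rw [sum4_prod, sum4_prod]
  exact Fintype.sum_equiv ⟨fun p => (p.2.1, p.2.2.1, p.1, p.2.2.2),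
    fun p => (p.2.2.1, p.1, p.2.1, p.2.2.2),
    fun p => rfl, fun p => rfl⟩ _ _ (fun p => rfl)

/-- The generic quadrilinear form given by coefficients `c`. -/
private def quadForm {M : Type*} [CommRing M] (c : Fin n → Fin n → Fin n → Fin n → M)
    (X Y U V : Fin n → M) : M :=
  ∑ i : Fin n, ∑ j : Fin n, ∑ k : Fin n, ∑ l : Fin n, c i j k l * X i * Y j * U k * V l

section quadForm
variable {M : Type*} [CommRing M] (c : Fin n → Fin n → Fin n → Fin n → M)

private lemma qf_add1 (X X' Y U V : Fin n → M) :
    quadForm c (X + X') Y U V = quadForm c X Y U V + quadForm c X' Y U V := by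
  unfold quadForm; rw [sum4_add]; exact sum4_congr fun i j k l => by
    simp only [Pi.add_apply]; ring

private lemma qf_add2 (X Y Y' U V : Fin n → M) :
    quadForm c X (Y + Y') U V = quadForm c X Y U V + quadForm c X Y' U V := by
  unfold quadForm; rw [sum4_add]; exact sum4_congr fun i j k l => by
    simp only [Pi.add_apply]; ring

private lemma qf_add3 (X Y U U' V : Fin n → M) :
    quadForm c X Y (U + U') V = quadForm c X Y U V + quadForm c X Y U' V := by
  unfold quadForm; rw [sum4_add]; exact sum4_congr fun i j k l => by
    simp only [Pi.add_apply]; ring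

private lemma qf_add4 (X Y U V V' : Fin n → M) :
    quadForm c X Y U (V + V') = quadForm c X Y U V + quadForm c X Y U V' := by
  unfold quadForm; rw [sum4_add]; exact sum4_congr fun i j k l => by
    simp only [Pi.add_apply]; ring

private lemma qf_smul1 (a : M) (X Y U V : Fin n → M) :
    quadForm c (a • X) Y U V = a * quadForm c X Y U V := by
  unfold quadForm; simp only [Finset.mul_sum]; exact sum4_congr fun i j k l => by
    simp only [Pi.smul_apply, smul_eq_mul]; ring

private lemma qf_smul2 (a : M) (X Y U V : Fin n → M) :
    quadForm c X (a • Y) U V = a * quadForm c X Y U V := by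
  unfold quadForm; simp only [Finset.mul_sum]; exact sum4_congr fun i j k l => by
    simp only [Pi.smul_apply, smul_eq_mul]; ring

private lemma qf_smul3 (a : M) (X Y U V : Fin n → M) :
    quadForm c X Y (a • U) V = a * quadForm c X Y U V := by
  unfold quadForm; simp only [Finset.mul_sum]; exact sum4_congr fun i j k l => by
    simp only [Pi.smul_apply, smul_eq_mul]; ring

private lemma qf_smul4 (a : M) (X Y U V : Fin n → M) :
    quadForm c X Y U (a • V) = a * quadForm c X Y U V := by
  unfold quadForm; simp only [Finset.mul_sum]; exact sum4_congr fun i j k l => by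
    simp only [Pi.smul_apply, smul_eq_mul]; ring

variable {c}

private lemma qf_skew12 (hc : ∀ i j k l, c i j k l = - c j i k l) (X Y U V : Fin n → M) :
    quadForm c Y X U V = - quadForm c X Y U V := by
  unfold quadForm
  rw [sum4_swap12 (fun i j k l => c i j k l * Y i * X j * U k * V l), ← Finset.sum_neg_distrib]
  refine Finset.sum_congr rfl fun i _ => ?_
  rw [← Finset.sum_neg_distrib]
  refine Finset.sum_congr rfl fun j _ => ?_
  rw [← Finset.sum_neg_distrib]
  refine Finset.sum_congr rfl fun k _ => ?_
  rw [← Finset.sum_neg_distrib]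
  refine Finset.sum_congr rfl fun l _ => ?_
  rw [hc j i k l]; ring

private lemma qf_skew34 (hc : ∀ i j k l, c i j k l = - c i j l k) (X Y U V : Fin n → M) :
    quadForm c X Y V U = - quadForm c X Y U V := by
  unfold quadForm
  rw [sum4_swap34 (fun i j k l => c i j k l * X i * Y j * V k * U l), ← Finset.sum_neg_distrib]
  refine Finset.sum_congr rfl fun i _ => ?_
  rw [← Finset.sum_neg_distrib]
  refine Finset.sum_congr rfl fun j _ => ?_
  rw [← Finset.sum_neg_distrib]
  refine Finset.sum_congr rfl fun k _ => ?_
  rw [← Finset.sum_neg_distrib]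
  refine Finset.sum_congr rfl fun l _ => ?_
  rw [hc i j l k]; ring

private lemma qf_pair (hc : ∀ i j k l, c i j k l = c k l i j) (X Y U V : Fin n → M) :
    quadForm c U V X Y = quadForm c X Y U V := by
  unfold quadForm
  rw [sum4_pairswap (fun i j k l => c i j k l * U i * V j * X k * Y l)]
  exact sum4_congr fun i j k l => by rw [hc k l i j]; ring

private lemma qf_bianchi (hc : ∀ i j k l, c i j k l + c j k i l + c k i j l = 0)
    (X Y U V : Fin n → M) :
    quadForm c X Y U V + quadForm c Y U X V + quadForm c U X Y V = 0 := by
  unfold quadForm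
  rw [sum4_cycle (fun i j k l => c i j k l * Y i * U j * X k * V l)]
  rw [sum4_cycle' (fun i j k l => c i j k l * U i * X j * Y k * V l)]
  rw [sum4_add, sum4_add]
  rw [show (0 : M) = ∑ i : Fin n, ∑ j : Fin n, ∑ k : Fin n, ∑ l : Fin n, (0 : M) by simp]
  exact sum4_congr fun i j k l => by
    linear_combination (X i * Y j * U k * V l) * hc i j k l

private lemma qf_zero12 [NoZeroDivisors M] [CharZero M]
    (hc : ∀ i j k l, c i j k l = - c j i k l) (X U V : Fin n → M) :
    quadForm c X X U V = 0 := by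
  have h := qf_skew12 hc X X U V
  have h2 : (2 : M) * quadForm c X X U V = 0 := by linear_combination h
  rcases mul_eq_zero.mp h2 with h3 | h3
  · exact absurd h3 two_ne_zero
  · exact h3

private lemma qf_zero34 [NoZeroDivisors M] [CharZero M]
    (hc : ∀ i j k l, c i j k l = - c i j l k) (X Y U : Fin n → M) :
    quadForm c X Y U U = 0 := by
  have h := qf_skew34 hc X Y U U
  have h2 : (2 : M) * quadForm c X Y U U = 0 := by linear_combination h
  rcases mul_eq_zero.mp h2 with h3 | h3
  · exact absurd h3 two_ne_zero
  · exact h3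

end quadForm

end Part0
section Part1

variable {n : ℕ}

private def castV (X : Fin n → ℝ) : Fin n → ℂ := fun i => (X i : ℂ)
private def reV (Z : Fin n → ℂ) : Fin n → ℝ := fun i => (Z i).re
private def imV (Z : Fin n → ℂ) : Fin n → ℝ := fun i => (Z i).im

namespace AlgCurv

variable (T : AlgCurv n)

private lemma evalR_qf : T.evalR = quadForm T.R := rfl

private lemma evalC_qf : T.evalC = quadForm (fun i j k l => ((T.R i j k l : ℝ) : ℂ)) := rfl

private lemma cC_skew12 : ∀ i j k l, ((T.R i j k l : ℝ) : ℂ) = - ((T.R j i k l : ℝ) : ℂ) := by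
  intro i j k l; rw [T.skew₁ i j k l]; push_cast; ring

private lemma cC_skew34 : ∀ i j k l, ((T.R i j k l : ℝ) : ℂ) = - ((T.R i j l k : ℝ) : ℂ) := by
  intro i j k l; rw [T.skew₂ i j k l]; push_cast; ring

private lemma evalR_add1 (X X' Y U V : Fin n → ℝ) :
    T.evalR (X + X') Y U V = T.evalR X Y U V + T.evalR X' Y U V := by
  rw [evalR_qf]; exact qf_add1 _ _ _ _ _ _
private lemma evalR_add2 (X Y Y' U V : Fin n → ℝ) :
    T.evalR X (Y + Y') U V = T.evalR X Y U V + T.evalR X Y' U V := by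
  rw [evalR_qf]; exact qf_add2 _ _ _ _ _ _
private lemma evalR_add3 (X Y U U' V : Fin n → ℝ) :
    T.evalR X Y (U + U') V = T.evalR X Y U V + T.evalR X Y U' V := by
  rw [evalR_qf]; exact qf_add3 _ _ _ _ _ _
private lemma evalR_add4 (X Y U V V' : Fin n → ℝ) :
    T.evalR X Y U (V + V') = T.evalR X Y U V + T.evalR X Y U V' := by
  rw [evalR_qf]; exact qf_add4 _ _ _ _ _ _
private lemma evalR_smul1 (a : ℝ) (X Y U V : Fin n → ℝ) :
    T.evalR (a • X) Y U V = a * T.evalR X Y U V := by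
  rw [evalR_qf]; exact qf_smul1 _ _ _ _ _ _
private lemma evalR_smul2 (a : ℝ) (X Y U V : Fin n → ℝ) :
    T.evalR X (a • Y) U V = a * T.evalR X Y U V := by
  rw [evalR_qf]; exact qf_smul2 _ _ _ _ _ _
private lemma evalR_smul3 (a : ℝ) (X Y U V : Fin n → ℝ) :
    T.evalR X Y (a • U) V = a * T.evalR X Y U V := by
  rw [evalR_qf]; exact qf_smul3 _ _ _ _ _ _
private lemma evalR_smul4 (a : ℝ) (X Y U V : Fin n → ℝ) :
    T.evalR X Y U (a • V) = a * T.evalR X Y U V := by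
  rw [evalR_qf]; exact qf_smul4 _ _ _ _ _ _

private lemma evalR_pair (X Y U V : Fin n → ℝ) :
    T.evalR U V X Y = T.evalR X Y U V := by
  rw [evalR_qf]; exact qf_pair T.pair_symm _ _ _ _

private lemma evalR_skew12 (X Y U V : Fin n → ℝ) :
    T.evalR Y X U V = - T.evalR X Y U V := by
  rw [evalR_qf]; exact qf_skew12 T.skew₁ _ _ _ _

private lemma evalR_skew34 (X Y U V : Fin n → ℝ) :
    T.evalR X Y V U = - T.evalR X Y U V := by
  rw [evalR_qf]; exact qf_skew34 T.skew₂ _ _ _ _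

private lemma evalR_bianchi (X Y U V : Fin n → ℝ) :
    T.evalR X Y U V + T.evalR Y U X V + T.evalR U X Y V = 0 := by
  rw [evalR_qf]; exact qf_bianchi T.bianchi _ _ _ _

/-- `R(x,v,y,u) - R(x,u,y,v) + R(x,y,u,v) = 0`. -/
private lemma evalR_cross (x y u v : Fin n → ℝ) :
    T.evalR x v y u - T.evalR x u y v + T.evalR x y u v = 0 := by
  have hb := T.evalR_bianchi x y u v
  have h1 : T.evalR y u x v = T.evalR x v y u := T.evalR_pair x v y u
  have h2 : T.evalR u x y v = - T.evalR x u y v := T.evalR_skew12 x u y v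
  linarith

private lemma evalC_add1 (Z Z' W U V : Fin n → ℂ) :
    T.evalC (Z + Z') W U V = T.evalC Z W U V + T.evalC Z' W U V := by
  rw [evalC_qf]; exact qf_add1 _ _ _ _ _ _
private lemma evalC_add2 (Z W W' U V : Fin n → ℂ) :
    T.evalC Z (W + W') U V = T.evalC Z W U V + T.evalC Z W' U V := by
  rw [evalC_qf]; exact qf_add2 _ _ _ _ _ _
private lemma evalC_add3 (Z W U U' V : Fin n → ℂ) :
    T.evalC Z W (U + U') V = T.evalC Z W U V + T.evalC Z W U' V := by
  rw [evalC_qf]; exact qf_add3 _ _ _ _ _ _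
private lemma evalC_add4 (Z W U V V' : Fin n → ℂ) :
    T.evalC Z W U (V + V') = T.evalC Z W U V + T.evalC Z W U V' := by
  rw [evalC_qf]; exact qf_add4 _ _ _ _ _ _
private lemma evalC_smul1 (a : ℂ) (Z W U V : Fin n → ℂ) :
    T.evalC (a • Z) W U V = a * T.evalC Z W U V := by
  rw [evalC_qf]; exact qf_smul1 _ _ _ _ _ _
private lemma evalC_smul2 (a : ℂ) (Z W U V : Fin n → ℂ) :
    T.evalC Z (a • W) U V = a * T.evalC Z W U V := by
  rw [evalC_qf]; exact qf_smul2 _ _ _ _ _ _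
private lemma evalC_smul3 (a : ℂ) (Z W U V : Fin n → ℂ) :
    T.evalC Z W (a • U) V = a * T.evalC Z W U V := by
  rw [evalC_qf]; exact qf_smul3 _ _ _ _ _ _
private lemma evalC_smul4 (a : ℂ) (Z W U V : Fin n → ℂ) :
    T.evalC Z W U (a • V) = a * T.evalC Z W U V := by
  rw [evalC_qf]; exact qf_smul4 _ _ _ _ _ _

private lemma evalC_zero12 (Z U V : Fin n → ℂ) : T.evalC Z Z U V = 0 := by
  rw [evalC_qf]; exact qf_zero12 T.cC_skew12 _ _ _
private lemma evalC_zero34 (Z W U : Fin n → ℂ) : T.evalC Z W U U = 0 := by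
  rw [evalC_qf]; exact qf_zero34 T.cC_skew34 _ _ _
private lemma evalC_skew12 (Z W U V : Fin n → ℂ) :
    T.evalC W Z U V = - T.evalC Z W U V := by
  rw [evalC_qf]; exact qf_skew12 T.cC_skew12 _ _ _ _
private lemma evalC_skew34 (Z W U V : Fin n → ℂ) :
    T.evalC Z W V U = - T.evalC Z W U V := by
  rw [evalC_qf]; exact qf_skew34 T.cC_skew34 _ _ _ _

private lemma evalC_cast (X Y U V : Fin n → ℝ) :
    T.evalC (castV X) (castV Y) (castV U) (castV V) = ((T.evalR X Y U V : ℝ) : ℂ) := by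
  rw [evalC_qf, evalR_qf]
  unfold quadForm castV
  push_cast
  rfl

end AlgCurv

end Part1
section Part2

variable {n : ℕ}

/-- The real quantity whose nonnegativity is the complex sectional curvature condition. -/
private def Fre (T : AlgCurv n) (x y u v : Fin n → ℝ) : ℝ :=
  T.evalR x u x u + T.evalR x v x v + T.evalR y u y u + T.evalR y v y v
    - 2 * T.evalR x y u v

private lemma decompZ (Z : Fin n → ℂ) :
    Z = castV (reV Z) + Complex.I • castV (imV Z) := by
  funext i
  simp only [castV, reV, imV, Pi.add_apply, Pi.smul_apply, smul_eq_mul]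
  rw [mul_comm]
  exact (Complex.re_add_im (Z i)).symm

private lemma decompZc (Z : Fin n → ℂ) :
    conjV Z = castV (reV Z) + (-Complex.I) • castV (imV Z) := by
  funext i
  simp only [conjV, castV, reV, imV, Pi.add_apply, Pi.smul_apply, smul_eq_mul]
  apply Complex.ext <;> simp

namespace AlgCurv

/-- Lemma D : the complex sectional curvature as a real number. -/
private lemma evalC_eq_Fre (T : AlgCurv n) (Z W : Fin n → ℂ) :
    T.evalC Z W (conjV Z) (conjV W)
      = ((Fre T (reV Z) (imV Z) (reV W) (imV W) : ℝ) : ℂ) := by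
  set x := reV Z with hx
  set y := imV Z with hy
  set u := reV W with hu
  set v := imV W with hv
  have hZ : Z = castV x + Complex.I • castV y := decompZ Z
  have hW : W = castV u + Complex.I • castV v := decompZ W
  have hZc : conjV Z = castV x + (-Complex.I) • castV y := decompZc Z
  have hWc : conjV W = castV u + (-Complex.I) • castV v := decompZc W
  rw [hZc, hWc, hZ, hW]
  simp only [evalC_add1, evalC_add2, evalC_add3, evalC_add4,
    evalC_smul1, evalC_smul2, evalC_smul3, evalC_smul4, evalC_cast]
  -- cast equality helpers
  have cpair : ∀ a b c d : Fin n → ℝ,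
      ((T.evalR a b c d : ℝ) : ℂ) = ((T.evalR c d a b : ℝ) : ℂ) := by
    intro a b c d; rw [T.evalR_pair c d a b]
  have h25 := cpair x u x v   -- e(x,u,x,v) = e(x,v,x,u)
  have h39 := cpair x u y u   -- e(x,u,y,u) = e(y,u,x,u)
  have h8_14 := cpair x v y v -- e(x,v,y,v) = e(y,v,x,v)
  have h12_15 := cpair y u y v
  have h7_10 := cpair x v y u
  have h4_13 := cpair x u y v
  have hcross : ((T.evalR x v y u : ℝ) : ℂ) - ((T.evalR x u y v : ℝ) : ℂ)
      + ((T.evalR x y u v : ℝ) : ℂ) = 0 := by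
    have := T.evalR_cross x y u v
    push_cast
    exact_mod_cast congrArg (fun r : ℝ => (r : ℂ)) this
  have hI : (Complex.I) ^ 2 = -1 := Complex.I_sq
  simp only [Fre]
  push_cast
  linear_combination (-Complex.I) * h25 + (-Complex.I) * h39 + (-Complex.I) * h8_14
    + (-Complex.I) * h12_15 + (-1 : ℂ) * h7_10 + h4_13 + 2 * hcross
    + (((T.evalR x u y v : ℝ) : ℂ) + ((T.evalR y v x u : ℝ) : ℂ)
       - ((T.evalR x v x v : ℝ) : ℂ) - ((T.evalR y u y u : ℝ) : ℂ)
       - ((T.evalR x v y u : ℝ) : ℂ) - ((T.evalR y u x v : ℝ) : ℂ)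
       + Complex.I * (((T.evalR x v y v : ℝ) : ℂ) + ((T.evalR y u y v : ℝ) : ℂ))
       - Complex.I * (((T.evalR y v x v : ℝ) : ℂ) + ((T.evalR y v y u : ℝ) : ℂ))
       + (Complex.I ^ 2 - 1) * ((T.evalR y v y v : ℝ) : ℂ)) * hI

end AlgCurv

end Part2
section Part3

variable {n : ℕ}

private lemma conjV_lin (a b : ℂ) (Z W : Fin n → ℂ) :
    conjV (a • Z + b • W)
      = (starRingEnd ℂ a) • conjV Z + (starRingEnd ℂ b) • conjV W := by
  funext i
  simp [conjV]

namespace AlgCurv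

/-- Lemma A : covariance of the complex sectional curvature under basis change. -/
private lemma evalC_transform (T : AlgCurv n) (a b c d : ℂ) (Z W : Fin n → ℂ) :
    T.evalC (a • Z + b • W) (c • Z + d • W)
        (conjV (a • Z + b • W)) (conjV (c • Z + d • W))
      = (a * d - b * c) * (starRingEnd ℂ (a * d - b * c))
          * T.evalC Z W (conjV Z) (conjV W) := by
  rw [conjV_lin a b Z W, conjV_lin c d Z W]
  have s1 : T.evalC Z W (conjV W) (conjV Z)
      = - T.evalC Z W (conjV Z) (conjV W) := T.evalC_skew34 _ _ _ _
  have s2 : T.evalC W Z (conjV Z) (conjV W)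
      = - T.evalC Z W (conjV Z) (conjV W) := T.evalC_skew12 _ _ _ _
  have s3 : T.evalC W Z (conjV W) (conjV Z)
      = T.evalC Z W (conjV Z) (conjV W) := by
    rw [T.evalC_skew12, T.evalC_skew34]; ring
  simp only [evalC_add1, evalC_add2, evalC_add3, evalC_add4,
    evalC_smul1, evalC_smul2, evalC_smul3, evalC_smul4,
    evalC_zero12, evalC_zero34, s1, s2, s3, map_sub, map_mul]
  ring

end AlgCurv

end Part3
section Part4

variable {n : ℕ}

/- ### cInner utilities -/

private lemma cInner_add_l (P Q R : Fin n → ℂ) :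
    cInner (P + Q) R = cInner P R + cInner Q R := by
  unfold cInner; rw [← Finset.sum_add_distrib]
  exact Finset.sum_congr rfl fun i _ => by simp [add_mul]

private lemma cInner_add_r (P Q R : Fin n → ℂ) :
    cInner P (Q + R) = cInner P Q + cInner P R := by
  unfold cInner; rw [← Finset.sum_add_distrib]
  exact Finset.sum_congr rfl fun i _ => by simp [mul_add]

private lemma cInner_smul_l (a : ℂ) (P R : Fin n → ℂ) :
    cInner (a • P) R = a * cInner P R := by
  unfold cInner; rw [Finset.mul_sum]
  exact Finset.sum_congr rfl fun i _ => by simp; ring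

private lemma cInner_smul_r (a : ℂ) (P R : Fin n → ℂ) :
    cInner P (a • R) = a * cInner P R := by
  unfold cInner; rw [Finset.mul_sum]
  exact Finset.sum_congr rfl fun i _ => by simp; ring

private lemma cInner_comm (P Q : Fin n → ℂ) : cInner P Q = cInner Q P := by
  unfold cInner; exact Finset.sum_congr rfl fun i _ => mul_comm _ _

private lemma cInner_conj_comm (Z W : Fin n → ℂ) :
    cInner W (conjV Z) = starRingEnd ℂ (cInner Z (conjV W)) := by
  unfold cInner conjV
  rw [map_sum]
  exact Finset.sum_congr rfl fun i _ => by simp; ring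

private def nsq (Z : Fin n → ℂ) : ℝ := ∑ i : Fin n, Complex.normSq (Z i)

private lemma cInner_self_conj (Z : Fin n → ℂ) :
    cInner Z (conjV Z) = ((nsq Z : ℝ) : ℂ) := by
  unfold cInner conjV nsq
  push_cast
  exact Finset.sum_congr rfl fun i _ => (Complex.mul_conj (Z i))

private lemma nsq_nonneg (Z : Fin n → ℂ) : 0 ≤ nsq Z :=
  Finset.sum_nonneg fun i _ => Complex.normSq_nonneg _

private lemma nsq_pos_of_ne (Z : Fin n → ℂ) (h : Z ≠ 0) : 0 < nsq Z := by
  rcases (nsq_nonneg Z).lt_or_eq with h1 | h1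
  · exact h1
  · exfalso; apply h
    have h2 := (Finset.sum_eq_zero_iff_of_nonneg
      (fun i (_ : i ∈ Finset.univ) => Complex.normSq_nonneg (Z i))).mp h1.symm
    funext i
    exact Complex.normSq_eq_zero.mp (h2 i (Finset.mem_univ i))

/- ### real inner product utilities -/

private lemma rInner_add_l (P Q R : Fin n → ℝ) :
    rInner (P + Q) R = rInner P R + rInner Q R := by
  unfold rInner; rw [← Finset.sum_add_distrib]
  exact Finset.sum_congr rfl fun i _ => by simp [add_mul]

private lemma rInner_add_r (P Q R : Fin n → ℝ) :
    rInner P (Q + R) = rInner P Q + rInner P R := by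
  unfold rInner; rw [← Finset.sum_add_distrib]
  exact Finset.sum_congr rfl fun i _ => by simp [mul_add]

private lemma rInner_smul_l (a : ℝ) (P R : Fin n → ℝ) :
    rInner (a • P) R = a * rInner P R := by
  unfold rInner; rw [Finset.mul_sum]
  exact Finset.sum_congr rfl fun i _ => by simp; ring

private lemma rInner_smul_r (a : ℝ) (P R : Fin n → ℝ) :
    rInner P (a • R) = a * rInner P R := by
  unfold rInner; rw [Finset.mul_sum]
  exact Finset.sum_congr rfl fun i _ => by simp; ring

private lemma rInner_comm (P Q : Fin n → ℝ) : rInner P Q = rInner Q P := by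
  unfold rInner; exact Finset.sum_congr rfl fun i _ => mul_comm _ _

private lemma rInner_neg_r (P Q : Fin n → ℝ) : rInner P (-Q) = - rInner P Q := by
  unfold rInner; rw [← Finset.sum_neg_distrib]
  exact Finset.sum_congr rfl fun i _ => by simp

private lemma rInner_self_nonneg (P : Fin n → ℝ) : 0 ≤ rInner P P :=
  Finset.sum_nonneg fun i _ => mul_self_nonneg _

private lemma eq_zero_of_rInner_self (P : Fin n → ℝ) (h : rInner P P = 0) : P = 0 := by
  funext i
  have h2 := (Finset.sum_eq_zero_iff_of_nonneg
    (fun i (_ : i ∈ Finset.univ) => mul_self_nonneg (P i))).mp h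
  exact mul_self_eq_zero.mp (h2 i (Finset.mem_univ i))

/- ### translation between complex and real inner products -/

private lemma cInner_re (Z W : Fin n → ℂ) :
    (cInner Z W).re = rInner (reV Z) (reV W) - rInner (imV Z) (imV W) := by
  unfold cInner rInner reV imV
  rw [Complex.re_sum, ← Finset.sum_sub_distrib]
  exact Finset.sum_congr rfl fun i _ => Complex.mul_re _ _

private lemma cInner_im (Z W : Fin n → ℂ) :
    (cInner Z W).im = rInner (reV Z) (imV W) + rInner (imV Z) (reV W) := by
  unfold cInner rInner reV imV
  rw [Complex.im_sum, ← Finset.sum_add_distrib]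
  exact Finset.sum_congr rfl fun i _ => Complex.mul_im _ _

private lemma conjV_reV (W : Fin n → ℂ) : reV (conjV W) = reV W := by
  funext i; simp [reV, conjV]

private lemma conjV_imV (W : Fin n → ℂ) : imV (conjV W) = - imV W := by
  funext i; simp [imV, conjV]

/-- The 6 orthogonality relations from the 4 normal-form conditions. -/
private lemma orth_of_conditions (Z W : Fin n → ℂ)
    (h1 : cInner Z W = 0) (h2 : cInner Z (conjV W) = 0)
    (h3 : (cInner Z Z).im = 0) (h4 : (cInner W W).im = 0) :
    rInner (reV Z) (imV Z) = 0 ∧ rInner (reV W) (imV W) = 0 ∧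
    rInner (reV Z) (reV W) = 0 ∧ rInner (reV Z) (imV W) = 0 ∧
    rInner (imV Z) (reV W) = 0 ∧ rInner (imV Z) (imV W) = 0 := by
  have e1r : rInner (reV Z) (reV W) - rInner (imV Z) (imV W) = 0 := by
    rw [← cInner_re, h1]; rfl
  have e1i : rInner (reV Z) (imV W) + rInner (imV Z) (reV W) = 0 := by
    rw [← cInner_im, h1]; rfl
  have e2r : rInner (reV Z) (reV W) + rInner (imV Z) (imV W) = 0 := by
    have h := cInner_re Z (conjV W)
    rw [h2, conjV_reV, conjV_imV, rInner_neg_r] at h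
    have h0 : (0:ℂ).re = 0 := rfl
    rw [h0] at h
    linarith [h.symm]
  have e2i : - rInner (reV Z) (imV W) + rInner (imV Z) (reV W) = 0 := by
    have h := cInner_im Z (conjV W)
    rw [h2, conjV_reV, conjV_imV, rInner_neg_r] at h
    have h0 : (0:ℂ).im = 0 := rfl
    rw [h0] at h
    linarith [h.symm]
  have e3 : rInner (reV Z) (imV Z) + rInner (imV Z) (reV Z) = 0 := by
    rw [← cInner_im, h3]
  have e4 : rInner (reV W) (imV W) + rInner (imV W) (reV W) = 0 := by
    rw [← cInner_im, h4]
  have c3 := rInner_comm (imV Z) (reV Z)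
  have c4 := rInner_comm (imV W) (reV W)
  exact ⟨by linarith, by linarith, by linarith, by linarith, by linarith, by linarith⟩

/- ### the Takagi-type rotation -/

private lemma exists_rotation (α β γ : ℂ) :
    ∃ t : ℂ, -(starRingEnd ℂ t) * α + (1 - t * starRingEnd ℂ t) * β + t * γ = 0 := by
  by_cases hβ : β = 0
  · exact ⟨0, by simp [hβ]⟩
  set κ : ℂ := γ * starRingEnd ℂ β + starRingEnd ℂ α * β with hκ
  obtain ⟨u, hu1, hu2⟩ : ∃ u : ℂ, u * starRingEnd ℂ u = 1 ∧ (u * κ).im = 0 := by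
    by_cases hκ0 : κ = 0
    · exact ⟨1, by simp, by simp [hκ0]⟩
    · refine ⟨starRingEnd ℂ κ * (↑‖κ‖)⁻¹, ?_, ?_⟩
      · have habs : ‖κ‖ ≠ 0 := norm_ne_zero_iff.mpr hκ0
        have hns : Complex.normSq (starRingEnd ℂ κ * (↑‖κ‖)⁻¹) = 1 := by
          rw [Complex.normSq_mul, Complex.normSq_conj, ← Complex.ofReal_inv,
            Complex.normSq_ofReal, Complex.normSq_eq_norm_sq]
          field_simp
        rw [Complex.mul_conj, hns]
        norm_num
      · have : starRingEnd ℂ κ * (↑‖κ‖)⁻¹ * κ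
            = ↑(Complex.normSq κ * ‖κ‖⁻¹) := by
          push_cast
          rw [← Complex.mul_conj κ]
          ring
        rw [this, Complex.ofReal_im]
  -- the quantity (u γ - ū α) β̄ is real
  have hreal : ((u * γ - starRingEnd ℂ u * α) * starRingEnd ℂ β).im = 0 := by
    have hc : starRingEnd ℂ (u * κ) = u * κ := Complex.conj_eq_iff_im.mpr hu2
    rw [← Complex.conj_eq_iff_im]
    simp only [hκ, map_mul, map_sub, map_add, Complex.conj_conj] at hc ⊢
    linear_combination hc
  set r : ℝ := ((u * γ - starRingEnd ℂ u * α) * starRingEnd ℂ β).re / Complex.normSq β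
    with hrdef
  have hr : u * γ - starRingEnd ℂ u * α = (r : ℝ) * β := by
    have hX : (u * γ - starRingEnd ℂ u * α) * starRingEnd ℂ β
        = (((u * γ - starRingEnd ℂ u * α) * starRingEnd ℂ β).re : ℝ) := by
      apply Complex.ext
      · simp
      · simp [hreal]
    have hb : starRingEnd ℂ β * β = ((Complex.normSq β : ℝ) : ℂ) := by
      rw [mul_comm]; exact Complex.mul_conj β
    have hnsβ : Complex.normSq β ≠ 0 := (Complex.normSq_pos.mpr hβ).ne'
    have h5 : (u * γ - starRingEnd ℂ u * α) * ((Complex.normSq β : ℝ) : ℂ)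
        = (((u * γ - starRingEnd ℂ u * α) * starRingEnd ℂ β).re : ℝ) * β := by
      rw [← hb]
      calc (u * γ - starRingEnd ℂ u * α) * (starRingEnd ℂ β * β)
          = ((u * γ - starRingEnd ℂ u * α) * starRingEnd ℂ β) * β := by ring
        _ = _ := by rw [hX]; simp
    have hns0 : ((Complex.normSq β : ℝ) : ℂ) ≠ 0 := by exact_mod_cast hnsβ
    apply mul_right_cancel₀ hns0
    rw [h5]
    have hcast : ((r : ℝ) : ℂ) * ((Complex.normSq β : ℝ) : ℂ)
        = ((((u * γ - starRingEnd ℂ u * α) * starRingEnd ℂ β).re : ℝ) : ℂ) := by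
      rw [hrdef]; push_cast; field_simp
    linear_combination (-β) * hcast
  set s : ℝ := Real.sqrt (r ^ 2 + 4) with hs
  have hs2 : s ^ 2 = r ^ 2 + 4 := Real.sq_sqrt (by positivity)
  set ρ : ℝ := (r + s) / 2 with hρdef
  have hρ : ρ ^ 2 = r * ρ + 1 := by
    rw [hρdef]; linear_combination hs2 / 4
  refine ⟨(ρ : ℝ) * u, ?_⟩
  have hconj : starRingEnd ℂ ((ρ : ℝ) * u) = (ρ : ℝ) * starRingEnd ℂ u := by
    rw [map_mul, Complex.conj_ofReal]
  rw [hconj]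
  have hρc : ((ρ : ℝ) : ℂ) ^ 2 = (r : ℝ) * (ρ : ℝ) + 1 := by exact_mod_cast hρ
  linear_combination ((ρ : ℝ) : ℂ) * hr + (-(((ρ : ℝ) : ℂ) ^ 2) * β) * hu1 + (-β) * hρc

/- ### phase adjustment -/

private lemma exists_phase (ζ : ℂ) :
    ∃ μ : ℂ, μ * starRingEnd ℂ μ = 1 ∧ (μ ^ 2 * ζ).im = 0 := by
  set θ : ℝ := -(ζ.arg) / 2 with hθ
  refine ⟨Complex.exp ((θ : ℂ) * Complex.I), ?_, ?_⟩
  · rw [← Complex.exp_conj, ← Complex.exp_add]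
    rw [map_mul, Complex.conj_ofReal, Complex.conj_I]
    rw [show (θ:ℂ)*Complex.I + (θ:ℂ)*(-Complex.I) = 0 by ring, Complex.exp_zero]
  · have hsq : Complex.exp ((θ:ℂ) * Complex.I) ^ 2
        = Complex.exp ((↑(-ζ.arg) : ℂ) * Complex.I) := by
      rw [sq, ← Complex.exp_add]
      congr 1
      rw [hθ]; push_cast; ring
    have key : Complex.exp ((↑(-ζ.arg) : ℂ) * Complex.I) * ζ
        = ((‖ζ‖ : ℝ) : ℂ) := by
      have h := Complex.norm_mul_exp_arg_mul_I ζ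
      nth_rewrite 2 [← h]
      calc Complex.exp ((↑(-ζ.arg) : ℂ) * Complex.I)
            * (((‖ζ‖ : ℝ) : ℂ) * Complex.exp ((ζ.arg : ℂ) * Complex.I))
          = ((‖ζ‖ : ℝ) : ℂ) * (Complex.exp ((↑(-ζ.arg) : ℂ) * Complex.I)
            * Complex.exp ((ζ.arg : ℂ) * Complex.I)) := by ring
        _ = ((‖ζ‖ : ℝ) : ℂ) * Complex.exp ((↑(-ζ.arg) : ℂ) * Complex.I
            + (ζ.arg : ℂ) * Complex.I) := by rw [Complex.exp_add]
        _ = ((‖ζ‖ : ℝ) : ℂ) := by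
            rw [show (↑(-ζ.arg) : ℂ) * Complex.I + (ζ.arg : ℂ) * Complex.I = 0 by
              push_cast; ring, Complex.exp_zero, mul_one]
    rw [hsq, key, Complex.ofReal_im]

end Part4
section Part5

variable {n : ℕ}

namespace AlgCurv

variable (T : AlgCurv n)

private lemma evalR_zero1 (Y U V : Fin n → ℝ) : T.evalR 0 Y U V = 0 := by
  have h : (0 : Fin n → ℝ) = (0 : ℝ) • (0 : Fin n → ℝ) := by simp
  rw [h, evalR_smul1]; ring

private lemma evalR_zero2 (Y U V : Fin n → ℝ) : T.evalR Y 0 U V = 0 := by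
  have h : (0 : Fin n → ℝ) = (0 : ℝ) • (0 : Fin n → ℝ) := by simp
  rw [h, evalR_smul2]; ring

private lemma evalR_zero3 (Y U V : Fin n → ℝ) : T.evalR Y U 0 V = 0 := by
  have h : (0 : Fin n → ℝ) = (0 : ℝ) • (0 : Fin n → ℝ) := by simp
  rw [h, evalR_smul3]; ring

private lemma evalR_zero4 (Y U V : Fin n → ℝ) : T.evalR Y U V 0 = 0 := by
  have h : (0 : Fin n → ℝ) = (0 : ℝ) • (0 : Fin n → ℝ) := by simp
  rw [h, evalR_smul4]; ring

/-- Second-order polarization (Berger). -/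
private lemma polar4 (p q w r : Fin n → ℝ) :
    8 * (T.evalR p q w r + T.evalR p r w q)
      = T.evalR (p + w) (q + r) (p + w) (q + r)
        - T.evalR (p + (-1:ℝ) • w) (q + r) (p + (-1:ℝ) • w) (q + r)
        - T.evalR (p + w) (q + (-1:ℝ) • r) (p + w) (q + (-1:ℝ) • r)
        + T.evalR (p + (-1:ℝ) • w) (q + (-1:ℝ) • r) (p + (-1:ℝ) • w) (q + (-1:ℝ) • r) := by
  have h3 := T.evalR_pair p q w r
  have h4 := T.evalR_pair p r w q
  simp only [evalR_add1, evalR_add2, evalR_add3, evalR_add4,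
    evalR_smul1, evalR_smul2, evalR_smul3, evalR_smul4]
  linarith

/-- The cross-term Bianchi relation `E2 - E3 = E`. -/
private lemma cross_bianchi (x y u v : Fin n → ℝ) :
    T.evalR x v u y - T.evalR x u v y = T.evalR x y u v := by
  have hb := T.evalR_bianchi x v u y
  have h1 : T.evalR v u x y = - T.evalR x y u v := by
    rw [T.evalR_pair x y v u]
    exact T.evalR_skew34 x y u v
  have h2 : T.evalR u x v y = - T.evalR x u v y := T.evalR_skew12 x u v y
  linarith

set_option maxHeartbeats 1000000 in
private lemma bound_E_unit (k : ℝ)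
    (hpinch : ∀ X Y : Fin n → ℝ,
      k / 4 * (rInner X X * rInner Y Y - rInner X Y ^ 2) ≤ T.evalR X Y X Y ∧
      T.evalR X Y X Y ≤ k * (rInner X X * rInner Y Y - rInner X Y ^ 2))
    (x y u v : Fin n → ℝ)
    (hxx : rInner x x = 1) (hyy : rInner y y = 1) (huu : rInner u u = 1)
    (hvv : rInner v v = 1)
    (oxy : rInner x y = 0) (ouv : rInner u v = 0) (oxu : rInner x u = 0)
    (oxv : rInner x v = 0) (oyu : rInner y u = 0) (oyv : rInner y v = 0) :
    2 * T.evalR x y u v ≤ k := by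
  have oyx : rInner y x = 0 := by rw [rInner_comm]; exact oxy
  have ovu : rInner v u = 0 := by rw [rInner_comm]; exact ouv
  have oux : rInner u x = 0 := by rw [rInner_comm]; exact oxu
  have ovx : rInner v x = 0 := by rw [rInner_comm]; exact oxv
  have ouy : rInner u y = 0 := by rw [rInner_comm]; exact oyu
  have ovy : rInner v y = 0 := by rw [rInner_comm]; exact oyv
  have hG1 := T.polar4 x y u v
  have hG2 := T.polar4 x y v u
  have u1 := (hpinch (x + u) (y + v)).2
  have u2 := (hpinch (x + (-1:ℝ) • u) (y + (-1:ℝ) • v)).2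
  have u3 := (hpinch (x + v) (y + (-1:ℝ) • u)).2
  have u4 := (hpinch (x + (-1:ℝ) • v) (y + u)).2
  have d1 := (hpinch (x + u) (y + (-1:ℝ) • v)).1
  have d2 := (hpinch (x + (-1:ℝ) • u) (y + v)).1
  have d3 := (hpinch (x + v) (y + u)).1
  have d4 := (hpinch (x + (-1:ℝ) • v) (y + (-1:ℝ) • u)).1
  simp only [rInner_add_l, rInner_add_r, rInner_smul_l, rInner_smul_r,
    hxx, hyy, huu, hvv, oxy, ouv, oxu, oxv, oyu, oyv, oyx, ovu, oux, ovx, ouy, ovy,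
    mul_zero, zero_mul, mul_one, one_mul, add_zero, zero_add, neg_zero,
    neg_neg] at u1 u2 u3 u4 d1 d2 d3 d4
  have hEE := T.cross_bianchi x y u v
  have hskew : T.evalR x y v u = - T.evalR x y u v := T.evalR_skew34 x y u v
  rw [hskew] at hG2
  linarith [hG1, hG2, u1, u2, u3, u4, d1, d2, d3, d4, hEE]

set_option maxHeartbeats 1000000 in
private lemma Fre_nonneg_orth (k : ℝ) (hk : 0 < k)
    (hpinch : ∀ X Y : Fin n → ℝ,
      k / 4 * (rInner X X * rInner Y Y - rInner X Y ^ 2) ≤ T.evalR X Y X Y ∧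
      T.evalR X Y X Y ≤ k * (rInner X X * rInner Y Y - rInner X Y ^ 2))
    (x y u v : Fin n → ℝ)
    (oxy : rInner x y = 0) (ouv : rInner u v = 0) (oxu : rInner x u = 0)
    (oxv : rInner x v = 0) (oyu : rInner y u = 0) (oyv : rInner y v = 0) :
    0 ≤ Fre T x y u v := by
  -- lower bounds for the four sectional terms
  have l1 := (hpinch x u).1
  have l2 := (hpinch x v).1
  have l3 := (hpinch y u).1
  have l4 := (hpinch y v).1
  rw [oxu] at l1; rw [oxv] at l2; rw [oyu] at l3; rw [oyv] at l4
  have nxx := rInner_self_nonneg x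
  have nyy := rInner_self_nonneg y
  have nuu := rInner_self_nonneg u
  have nvv := rInner_self_nonneg v
  -- degenerate cases
  by_cases hx0 : rInner x x = 0
  · have hx := eq_zero_of_rInner_self x hx0
    subst hx
    unfold Fre
    rw [T.evalR_zero1, T.evalR_zero1, T.evalR_zero1]
    have g3 : 0 ≤ T.evalR y u y u := by
      nlinarith [l3, mul_nonneg hk.le (mul_nonneg nyy nuu)]
    have g4 : 0 ≤ T.evalR y v y v := by
      nlinarith [l4, mul_nonneg hk.le (mul_nonneg nyy nvv)]
    linarith
  by_cases hy0 : rInner y y = 0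
  · have hy := eq_zero_of_rInner_self y hy0
    subst hy
    unfold Fre
    rw [T.evalR_zero1, T.evalR_zero1, T.evalR_zero2]
    have g1 : 0 ≤ T.evalR x u x u := by
      nlinarith [l1, mul_nonneg hk.le (mul_nonneg nxx nuu)]
    have g2 : 0 ≤ T.evalR x v x v := by
      nlinarith [l2, mul_nonneg hk.le (mul_nonneg nxx nvv)]
    linarith
  by_cases hu0 : rInner u u = 0
  · have hu := eq_zero_of_rInner_self u hu0
    subst hu
    unfold Fre
    rw [T.evalR_zero2, T.evalR_zero2, T.evalR_zero3]
    have g2 : 0 ≤ T.evalR x v x v := by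
      nlinarith [l2, mul_nonneg hk.le (mul_nonneg nxx nvv)]
    have g4 : 0 ≤ T.evalR y v y v := by
      nlinarith [l4, mul_nonneg hk.le (mul_nonneg nyy nvv)]
    linarith
  by_cases hv0 : rInner v v = 0
  · have hv := eq_zero_of_rInner_self v hv0
    subst hv
    unfold Fre
    rw [T.evalR_zero2, T.evalR_zero2, T.evalR_zero4]
    have g1 : 0 ≤ T.evalR x u x u := by
      nlinarith [l1, mul_nonneg hk.le (mul_nonneg nxx nuu)]
    have g3 : 0 ≤ T.evalR y u y u := by
      nlinarith [l3, mul_nonneg hk.le (mul_nonneg nyy nuu)]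
    linarith
  -- main case : normalize
  obtain ⟨a, ha, hA2⟩ : ∃ a : ℝ, 0 < a ∧ rInner x x = a ^ 2 :=
    ⟨Real.sqrt (rInner x x), Real.sqrt_pos.mpr (lt_of_le_of_ne nxx (Ne.symm hx0)),
      (Real.sq_sqrt nxx).symm⟩
  obtain ⟨b, hb, hB2⟩ : ∃ b : ℝ, 0 < b ∧ rInner y y = b ^ 2 :=
    ⟨Real.sqrt (rInner y y), Real.sqrt_pos.mpr (lt_of_le_of_ne nyy (Ne.symm hy0)),
      (Real.sq_sqrt nyy).symm⟩
  obtain ⟨c, hc, hC2⟩ : ∃ c : ℝ, 0 < c ∧ rInner u u = c ^ 2 :=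
    ⟨Real.sqrt (rInner u u), Real.sqrt_pos.mpr (lt_of_le_of_ne nuu (Ne.symm hu0)),
      (Real.sq_sqrt nuu).symm⟩
  obtain ⟨d, hd, hD2⟩ : ∃ d : ℝ, 0 < d ∧ rInner v v = d ^ 2 :=
    ⟨Real.sqrt (rInner v v), Real.sqrt_pos.mpr (lt_of_le_of_ne nvv (Ne.symm hv0)),
      (Real.sq_sqrt nvv).symm⟩
  have hbound := T.bound_E_unit k hpinch (a⁻¹ • x) (b⁻¹ • y) (c⁻¹ • u) (d⁻¹ • v)
    (by rw [rInner_smul_l, rInner_smul_r, hA2]; field_simp)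
    (by rw [rInner_smul_l, rInner_smul_r, hB2]; field_simp)
    (by rw [rInner_smul_l, rInner_smul_r, hC2]; field_simp)
    (by rw [rInner_smul_l, rInner_smul_r, hD2]; field_simp)
    (by rw [rInner_smul_l, rInner_smul_r, oxy]; ring)
    (by rw [rInner_smul_l, rInner_smul_r, ouv]; ring)
    (by rw [rInner_smul_l, rInner_smul_r, oxu]; ring)
    (by rw [rInner_smul_l, rInner_smul_r, oxv]; ring)
    (by rw [rInner_smul_l, rInner_smul_r, oyu]; ring)
    (by rw [rInner_smul_l, rInner_smul_r, oyv]; ring)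
  rw [T.evalR_smul1, T.evalR_smul2, T.evalR_smul3, T.evalR_smul4] at hbound
  have hE : 2 * T.evalR x y u v ≤ k * (a * b * c * d) := by
    have habcd : 0 < a * b * c * d := by positivity
    have key := mul_le_mul_of_nonneg_right hbound habcd.le
    have hcancel : a⁻¹ * (b⁻¹ * (c⁻¹ * (d⁻¹ * T.evalR x y u v))) * (a * b * c * d)
        = T.evalR x y u v := by
      rw [show a⁻¹ * (b⁻¹ * (c⁻¹ * (d⁻¹ * T.evalR x y u v))) * (a * b * c * d)
          = (a⁻¹ * a) * ((b⁻¹ * b) * ((c⁻¹ * c) * ((d⁻¹ * d) * T.evalR x y u v))) from by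
        ring]
      rw [inv_mul_cancel₀ ha.ne', inv_mul_cancel₀ hb.ne', inv_mul_cancel₀ hc.ne',
        inv_mul_cancel₀ hd.ne']
      ring
    calc 2 * T.evalR x y u v
        = 2 * (a⁻¹ * (b⁻¹ * (c⁻¹ * (d⁻¹ * T.evalR x y u v))) * (a * b * c * d)) := by
          rw [hcancel]
      _ = 2 * (a⁻¹ * (b⁻¹ * (c⁻¹ * (d⁻¹ * T.evalR x y u v)))) * (a * b * c * d) := by
          ring
      _ ≤ k * (a * b * c * d) := key
  -- conclude
  unfold Fre
  rw [hA2, hC2] at l1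
  rw [hA2, hD2] at l2
  rw [hB2, hC2] at l3
  rw [hB2, hD2] at l4
  nlinarith [l1, l2, l3, l4, hE, mul_nonneg hk.le (sq_nonneg (a*c - b*d)),
    mul_nonneg hk.le (sq_nonneg (a*d - b*c))]

end AlgCurv

end Part5
section Part6

variable {n : ℕ}

private lemma conjV_zero : conjV (0 : Fin n → ℂ) = 0 := by
  funext i; simp [conjV]

private lemma conjV_smul (a : ℂ) (Z : Fin n → ℂ) :
    conjV (a • Z) = (starRingEnd ℂ a) • conjV Z := by
  funext i; simp [conjV]

namespace AlgCurv

variable (T : AlgCurv n)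

private lemma evalC_zeroV1 (W U V : Fin n → ℂ) : T.evalC 0 W U V = 0 := by
  have h : (0 : Fin n → ℂ) = (0 : ℂ) • (0 : Fin n → ℂ) := by simp
  rw [h, evalC_smul1]; ring

private lemma evalC_zeroV2 (W U V : Fin n → ℂ) : T.evalC W 0 U V = 0 := by
  have h : (0 : Fin n → ℂ) = (0 : ℂ) • (0 : Fin n → ℂ) := by simp
  rw [h, evalC_smul2]; ring

/-- Step 4 : from `q`- and `h`-orthogonal pairs. -/
private lemma Fre_step4 (k : ℝ) (hk : 0 < k)
    (hpinch : ∀ X Y : Fin n → ℝ,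
      k / 4 * (rInner X X * rInner Y Y - rInner X Y ^ 2) ≤ T.evalR X Y X Y ∧
      T.evalR X Y X Y ≤ k * (rInner X X * rInner Y Y - rInner X Y ^ 2))
    (Z W : Fin n → ℂ) (hq : cInner Z W = 0) (hh : cInner Z (conjV W) = 0) :
    0 ≤ Fre T (reV Z) (imV Z) (reV W) (imV W) := by
  obtain ⟨μ, hμ1, hμ2⟩ := exists_phase (cInner Z Z)
  obtain ⟨ν, hν1, hν2⟩ := exists_phase (cInner W W)
  have cov := T.evalC_transform μ 0 0 ν Z W
  have ea : μ • Z + (0 : ℂ) • W = μ • Z := by funext i; simp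
  have eb : (0 : ℂ) • Z + ν • W = ν • W := by funext i; simp
  rw [ea, eb, Complex.mul_conj] at cov
  have f1 : cInner (μ • Z) (ν • W) = 0 := by
    rw [cInner_smul_l, cInner_smul_r, hq]; ring
  have f2 : cInner (μ • Z) (conjV (ν • W)) = 0 := by
    rw [conjV_smul, cInner_smul_l, cInner_smul_r, hh]; ring
  have f3 : (cInner (μ • Z) (μ • Z)).im = 0 := by
    rw [cInner_smul_l, cInner_smul_r, ← mul_assoc, ← sq]; exact hμ2
  have f4 : (cInner (ν • W) (ν • W)).im = 0 := by
    rw [cInner_smul_l, cInner_smul_r, ← mul_assoc, ← sq]; exact hν2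
  obtain ⟨o1, o2, o3, o4, o5, o6⟩ := orth_of_conditions (μ • Z) (ν • W) f1 f2 f3 f4
  have hr4 := T.Fre_nonneg_orth k hk hpinch (reV (μ • Z)) (imV (μ • Z))
    (reV (ν • W)) (imV (ν • W)) o1 o2 o3 o4 o5 o6
  rw [T.evalC_eq_Fre (μ • Z) (ν • W), T.evalC_eq_Fre Z W] at cov
  have hμ0 : μ ≠ 0 := by intro h; rw [h] at hμ1; simp at hμ1
  have hν0 : ν ≠ 0 := by intro h; rw [h] at hν1; simp at hν1
  have hns : 0 < Complex.normSq (μ * ν - 0 * 0) := by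
    apply Complex.normSq_pos.mpr
    simpa using mul_ne_zero hμ0 hν0
  have hreal : Fre T (reV (μ • Z)) (imV (μ • Z)) (reV (ν • W)) (imV (ν • W))
      = Complex.normSq (μ * ν - 0 * 0)
        * Fre T (reV Z) (imV Z) (reV W) (imV W) := by exact_mod_cast cov
  by_contra hcon
  push_neg at hcon
  nlinarith [hr4, hreal, mul_neg_of_pos_of_neg hns hcon]

/-- Step 3 : from `h`-orthogonal pairs with equal norms. -/
private lemma Fre_step3 (k : ℝ) (hk : 0 < k)
    (hpinch : ∀ X Y : Fin n → ℝ,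
      k / 4 * (rInner X X * rInner Y Y - rInner X Y ^ 2) ≤ T.evalR X Y X Y ∧
      T.evalR X Y X Y ≤ k * (rInner X X * rInner Y Y - rInner X Y ^ 2))
    (Z W : Fin n → ℂ) (hh : cInner Z (conjV W) = 0)
    (hnorm : cInner Z (conjV Z) = cInner W (conjV W)) :
    0 ≤ Fre T (reV Z) (imV Z) (reV W) (imV W) := by
  obtain ⟨t, ht⟩ := exists_rotation (cInner Z Z) (cInner Z W) (cInner W W)
  have cov := T.evalC_transform 1 t (-(starRingEnd ℂ t)) 1 Z W
  rw [Complex.mul_conj] at cov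
  have hq3 : cInner ((1:ℂ) • Z + t • W) ((-(starRingEnd ℂ t)) • Z + (1:ℂ) • W) = 0 := by
    simp only [cInner_add_l, cInner_add_r, cInner_smul_l, cInner_smul_r]
    rw [cInner_comm W Z]
    linear_combination ht
  have hh3 : cInner ((1:ℂ) • Z + t • W)
      (conjV ((-(starRingEnd ℂ t)) • Z + (1:ℂ) • W)) = 0 := by
    rw [conjV_lin]
    simp only [cInner_add_l, cInner_add_r, cInner_smul_l, cInner_smul_r, map_neg,
      Complex.conj_conj, map_one]
    rw [cInner_conj_comm Z W, hh]
    simp only [map_zero]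
    linear_combination (-t) * hnorm
  have hstep := T.Fre_step4 k hk hpinch ((1:ℂ) • Z + t • W)
    ((-(starRingEnd ℂ t)) • Z + (1:ℂ) • W) hq3 hh3
  rw [T.evalC_eq_Fre ((1:ℂ) • Z + t • W) ((-(starRingEnd ℂ t)) • Z + (1:ℂ) • W),
    T.evalC_eq_Fre Z W] at cov
  have hD : (1:ℂ) * 1 - t * (-(starRingEnd ℂ t)) = ((1 + Complex.normSq t : ℝ) : ℂ) := by
    push_cast
    linear_combination Complex.mul_conj t
  have hns : 0 < Complex.normSq ((1:ℂ) * 1 - t * (-(starRingEnd ℂ t))) := by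
    apply Complex.normSq_pos.mpr
    rw [hD]
    have hpos : (0:ℝ) < 1 + Complex.normSq t := by nlinarith [Complex.normSq_nonneg t]
    exact Complex.ofReal_ne_zero.mpr hpos.ne'
  have hreal : Fre T (reV ((1:ℂ) • Z + t • W)) (imV ((1:ℂ) • Z + t • W))
      (reV ((-(starRingEnd ℂ t)) • Z + (1:ℂ) • W))
      (imV ((-(starRingEnd ℂ t)) • Z + (1:ℂ) • W))
      = Complex.normSq ((1:ℂ) * 1 - t * (-(starRingEnd ℂ t)))
        * Fre T (reV Z) (imV Z) (reV W) (imV W) := by exact_mod_cast cov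
  by_contra hcon
  push_neg at hcon
  nlinarith [hstep, hreal, mul_neg_of_pos_of_neg hns hcon]

/-- Step 2 : from `h`-orthogonal nonzero pairs. -/
private lemma Fre_step2 (k : ℝ) (hk : 0 < k)
    (hpinch : ∀ X Y : Fin n → ℝ,
      k / 4 * (rInner X X * rInner Y Y - rInner X Y ^ 2) ≤ T.evalR X Y X Y ∧
      T.evalR X Y X Y ≤ k * (rInner X X * rInner Y Y - rInner X Y ^ 2))
    (Z W : Fin n → ℂ) (hh : cInner Z (conjV W) = 0)
    (hZ0 : Z ≠ 0) (hW0 : W ≠ 0) :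
    0 ≤ Fre T (reV Z) (imV Z) (reV W) (imV W) := by
  have hnZ : 0 < nsq Z := nsq_pos_of_ne Z hZ0
  have hnW : 0 < nsq W := nsq_pos_of_ne W hW0
  obtain ⟨rZ, hrZ, hrZ2⟩ : ∃ r : ℝ, 0 < r ∧ r ^ 2 = nsq Z :=
    ⟨Real.sqrt (nsq Z), Real.sqrt_pos.mpr hnZ, Real.sq_sqrt hnZ.le⟩
  obtain ⟨rW, hrW, hrW2⟩ : ∃ r : ℝ, 0 < r ∧ r ^ 2 = nsq W :=
    ⟨Real.sqrt (nsq W), Real.sqrt_pos.mpr hnW, Real.sq_sqrt hnW.le⟩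
  have cov := T.evalC_transform ((rW : ℝ) : ℂ) 0 0 ((rZ : ℝ) : ℂ) Z W
  have ea : ((rW : ℝ) : ℂ) • Z + (0 : ℂ) • W = ((rW : ℝ) : ℂ) • Z := by
    funext i
    simp only [Pi.add_apply, Pi.smul_apply, smul_eq_mul, zero_mul, add_zero]
  have eb : (0 : ℂ) • Z + ((rZ : ℝ) : ℂ) • W = ((rZ : ℝ) : ℂ) • W := by
    funext i
    simp only [Pi.add_apply, Pi.smul_apply, smul_eq_mul, zero_mul, zero_add]
  rw [ea, eb, Complex.mul_conj] at cov
  have hh2 : cInner (((rW : ℝ) : ℂ) • Z) (conjV (((rZ : ℝ) : ℂ) • W)) = 0 := by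
    rw [conjV_smul, cInner_smul_l, cInner_smul_r, hh]
    ring
  have hnorm2 : cInner (((rW : ℝ) : ℂ) • Z) (conjV (((rW : ℝ) : ℂ) • Z))
      = cInner (((rZ : ℝ) : ℂ) • W) (conjV (((rZ : ℝ) : ℂ) • W)) := by
    rw [conjV_smul, conjV_smul, cInner_smul_l, cInner_smul_r, cInner_smul_l,
      cInner_smul_r, cInner_self_conj, cInner_self_conj, Complex.conj_ofReal,
      Complex.conj_ofReal]
    have hr : rW * (rW * nsq Z) = rZ * (rZ * nsq W) := by
      linear_combination (nsq Z) * hrW2 - (nsq W) * hrZ2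
    exact_mod_cast congrArg (fun r : ℝ => (r : ℂ)) hr
  have hstep := T.Fre_step3 k hk hpinch (((rW : ℝ) : ℂ) • Z) (((rZ : ℝ) : ℂ) • W)
    hh2 hnorm2
  rw [T.evalC_eq_Fre (((rW : ℝ) : ℂ) • Z) (((rZ : ℝ) : ℂ) • W),
    T.evalC_eq_Fre Z W] at cov
  have hns : 0 < Complex.normSq (((rW : ℝ) : ℂ) * ((rZ : ℝ) : ℂ) - 0 * 0) := by
    apply Complex.normSq_pos.mpr
    have h1 : ((rW : ℝ) : ℂ) * ((rZ : ℝ) : ℂ) - 0 * 0 = (((rW * rZ : ℝ)) : ℂ) := by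
      push_cast; ring
    rw [h1]
    exact Complex.ofReal_ne_zero.mpr (by positivity)
  have hreal : Fre T (reV (((rW : ℝ) : ℂ) • Z)) (imV (((rW : ℝ) : ℂ) • Z))
      (reV (((rZ : ℝ) : ℂ) • W)) (imV (((rZ : ℝ) : ℂ) • W))
      = Complex.normSq (((rW : ℝ) : ℂ) * ((rZ : ℝ) : ℂ) - 0 * 0)
        * Fre T (reV Z) (imV Z) (reV W) (imV W) := by exact_mod_cast cov
  by_contra hcon
  push_neg at hcon
  nlinarith [hstep, hreal, mul_neg_of_pos_of_neg hns hcon]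

set_option maxHeartbeats 1000000 in
/-- The main estimate: `Fre` is nonnegative for every complex pair. -/
private lemma Fre_nonneg_main (k : ℝ) (hk : 0 < k)
    (hpinch : ∀ X Y : Fin n → ℝ,
      k / 4 * (rInner X X * rInner Y Y - rInner X Y ^ 2) ≤ T.evalR X Y X Y ∧
      T.evalR X Y X Y ≤ k * (rInner X X * rInner Y Y - rInner X Y ^ 2))
    (Z W : Fin n → ℂ) :
    0 ≤ Fre T (reV Z) (imV Z) (reV W) (imV W) := by
  have hE0 := T.evalC_eq_Fre Z W
  by_cases hZ0 : Z = 0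
  · have hz : T.evalC Z W (conjV Z) (conjV W) = 0 := by
      rw [hZ0]; exact T.evalC_zeroV1 _ _ _
    rw [hz] at hE0
    have h0 : Fre T (reV Z) (imV Z) (reV W) (imV W) = 0 := by exact_mod_cast hE0.symm
    linarith
  -- Step 1 : Gram-Schmidt
  have hnZ : 0 < nsq Z := nsq_pos_of_ne Z hZ0
  have cov1 := T.evalC_transform 1 0 (-(cInner W (conjV Z))) (((nsq Z : ℝ) : ℂ)) Z W
  have e1 : (1 : ℂ) • Z + (0 : ℂ) • W = Z := by funext i; simp
  rw [e1, Complex.mul_conj] at cov1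
  have hA1 : cInner Z (conjV ((-(cInner W (conjV Z))) • Z + (((nsq Z : ℝ) : ℂ)) • W)) = 0 := by
    rw [conjV_lin, cInner_add_r, cInner_smul_r, cInner_smul_r]
    rw [cInner_self_conj]
    have hconj : starRingEnd ℂ (-(cInner W (conjV Z))) = - cInner Z (conjV W) := by
      rw [map_neg, ← cInner_conj_comm]
    rw [hconj]
    have hrealc : starRingEnd ℂ (((nsq Z : ℝ) : ℂ)) = ((nsq Z : ℝ) : ℂ) :=
      Complex.conj_ofReal _
    rw [hrealc]
    ring
  have hdet1 : 0 < Complex.normSq ((1 : ℂ) * ((nsq Z : ℝ) : ℂ)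
      - 0 * (-(cInner W (conjV Z)))) := by
    apply Complex.normSq_pos.mpr
    simp only [one_mul, zero_mul, sub_zero]
    exact Complex.ofReal_ne_zero.mpr hnZ.ne'
  by_cases hW1 : (-(cInner W (conjV Z))) • Z + (((nsq Z : ℝ) : ℂ)) • W = 0
  · -- degenerate : Z, W linearly dependent
    rw [hW1, conjV_zero] at cov1
    rw [T.evalC_zeroV2] at cov1
    rw [hE0] at cov1
    have hr00 : ((Fre T (reV Z) (imV Z) (reV W) (imV W) : ℝ) : ℂ) = 0 := by
      rcases mul_eq_zero.mp cov1.symm with h | h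
      · exfalso
        have h0 : Complex.normSq ((1 : ℂ) * ((nsq Z : ℝ) : ℂ)
            - 0 * (-(cInner W (conjV Z)))) = 0 := by exact_mod_cast h
        linarith
      · exact h
    have h0 : Fre T (reV Z) (imV Z) (reV W) (imV W) = 0 := by exact_mod_cast hr00
    linarith
  have hstep := T.Fre_step2 k hk hpinch Z
    ((-(cInner W (conjV Z))) • Z + (((nsq Z : ℝ) : ℂ)) • W) hA1 hZ0 hW1
  rw [T.evalC_eq_Fre Z ((-(cInner W (conjV Z))) • Z + (((nsq Z : ℝ) : ℂ)) • W),
    hE0] at cov1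
  have hreal : Fre T (reV Z) (imV Z)
      (reV ((-(cInner W (conjV Z))) • Z + (((nsq Z : ℝ) : ℂ)) • W))
      (imV ((-(cInner W (conjV Z))) • Z + (((nsq Z : ℝ) : ℂ)) • W))
      = Complex.normSq ((1 : ℂ) * ((nsq Z : ℝ) : ℂ) - 0 * (-(cInner W (conjV Z))))
        * Fre T (reV Z) (imV Z) (reV W) (imV W) := by exact_mod_cast cov1
  by_contra hcon
  push_neg at hcon
  nlinarith [hstep, hreal, mul_neg_of_pos_of_neg hdet1 hcon]

end AlgCurv

end Part6


/-- pointwise 1/4-pinching implies nonnegative complex sectional curvature. -/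
theorem quarter_pinched_nonnegCSC {n : ℕ} (hn : 2 ≤ n) (T : AlgCurv n) (k : ℝ) (hk : 0 < k)
    (hpinch : ∀ X Y : Fin n → ℝ,
      k / 4 * (rInner X X * rInner Y Y - rInner X Y ^ 2) ≤ T.evalR X Y X Y ∧
      T.evalR X Y X Y ≤ k * (rInner X X * rInner Y Y - rInner X Y ^ 2)) :
    nonnegCSC T := by
  intro Z W
  exact ⟨Fre T (reV Z) (imV Z) (reV W) (imV W),
    T.Fre_nonneg_main k hk hpinch Z W, T.evalC_eq_Fre Z W⟩
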